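/- A flat connection on a transitive Courant algebroid is a connection: if ∇ : T_X → Q is an O_X-linear section of the anchor which is a morphism of Leibniz algebras, then the symmetric pairing vanishes on the image of ∇, i.e. ⟨∇ξ, ∇η⟩ = 0 for all vector fields ξ, η. -/
import Mathlib


noncomputable section

/-- The "vector fields" on the algebraic model of the space with function ring `O`. -/
abbrev Vec (O : Type*) [CommRing O] [Algebra ℂ O] := Derivation ℂ O O

/-- Algebraic model of a Courant `O`-algebroid: an `O`-module `Q` equipped with a
Leibniz bracket, an `O`-linear anchor into vector fields, a symmetric `O`-bilinear
pairing, and a derivation `∂ : O → Q`, subject to the Courant axioms. -/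
structure CourantAlgebroid (O : Type*) [CommRing O] [Algebra ℂ O]
    (Q : Type*) [AddCommGroup Q] [Module O Q] where
  bracket : Q → Q → Q
  bracket_add_left : ∀ q₁ q₂ q₃, bracket (q₁ + q₂) q₃ = bracket q₁ q₃ + bracket q₂ q₃
  bracket_add_right : ∀ q₁ q₂ q₃, bracket q₁ (q₂ + q₃) = bracket q₁ q₂ + bracket q₁ q₃
  anchor : Q →ₗ[O] Vec O
  pair : Q →ₗ[O] Q →ₗ[O] O
  pair_symm : ∀ q₁ q₂, pair q₁ q₂ = pair q₂ q₁
  par : O → Q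
  par_add : ∀ f g, par (f + g) = par f + par g
  par_mul : ∀ f g, par (f * g) = f • par g + g • par f
  anchor_par : ∀ f, anchor (par f) = 0
  anchor_bracket : ∀ q₁ q₂, anchor (bracket q₁ q₂) = ⁅anchor q₁, anchor q₂⁆
  jacobi : ∀ q q₁ q₂, bracket q (bracket q₁ q₂)
      = bracket (bracket q q₁) q₂ + bracket q₁ (bracket q q₂)
  leibniz : ∀ (q₁ q₂ : Q) (f : O), bracket q₁ (f • q₂) = f • bracket q₁ q₂ + anchor q₁ f • q₂
  invar : ∀ q q₁ q₂, pair (bracket q q₁) q₂ + pair q₁ (bracket q q₂)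
      = anchor q (pair q₁ q₂)
  bracket_par : ∀ (q : Q) (f : O), bracket q (par f) = par (anchor q f)
  pair_par : ∀ (q : Q) (f : O), pair q (par f) = anchor q f
  symm_bracket : ∀ q₁ q₂, bracket q₁ q₂ + bracket q₂ q₁ = par (pair q₁ q₂)

/-- `Ω_Q`: the `O`-submodule of `Q` generated by the image of the derivation `∂`. -/
def CourantAlgebroid.Omega {O : Type*} [CommRing O] [Algebra ℂ O]
    {Q : Type*} [AddCommGroup Q] [Module O Q] (C : CourantAlgebroid O Q) : Submodule O Q :=
  Submodule.span O (Set.range C.par)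

/-- a flat connection on a transitive Courant algebroid is a
connection: if `nabla` is an `O`-linear section of the anchor which is a morphism
of Leibniz algebras, then the symmetric pairing vanishes on the image of `nabla`.
(The hypotheses `hker`, `hnc` and `IsDomain O` encode that the kernel of the
derivation `∂` consists of the constants and that not every function is
constant, as in the geometric setting.) -/
theorem flat_connection_is_isotropic
    (O : Type*) [CommRing O] [IsDomain O] [Algebra ℂ O]
    (Q : Type*) [AddCommGroup Q] [Module O Q]
    (C : CourantAlgebroid O Q)
    (hsurj : Function.Surjective C.anchor)
    (hker : ∀ a : O, C.par a = 0 → a ∈ (algebraMap ℂ O).range)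
    (hnc : ∃ f : O, f ∉ (algebraMap ℂ O).range)
    (nabla : Vec O →ₗ[O] Q)
    (hsec : ∀ ξ : Vec O, C.anchor (nabla ξ) = ξ)
    (hflat : ∀ ξ η : Vec O, C.bracket (nabla ξ) (nabla η) = nabla ⁅ξ, η⁆) :
    ∀ ξ η : Vec O, C.pair (nabla ξ) (nabla η) = 0 := by
  -- key: the pairing of flat sections lies in the kernel of ∂
  have key : ∀ ξ η : Vec O, C.par (C.pair (nabla ξ) (nabla η)) = 0 := by
    intro ξ η
    rw [← C.symm_bracket, hflat, hflat, ← map_add]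
    have : ⁅ξ, η⁆ + ⁅η, ξ⁆ = 0 := by
      rw [← lie_skew ξ η]; abel
    rw [this, map_zero]
  intro ξ η
  by_contra hne
  obtain ⟨f, hf⟩ := hnc
  apply hf
  obtain ⟨z, hz⟩ := hker _ (key ξ η)
  obtain ⟨w, hw⟩ := hker _ (key (f • ξ) η)
  have hfk : C.pair (nabla (f • ξ)) (nabla η) = f * C.pair (nabla ξ) (nabla η) := by
    simp [map_smul, LinearMap.smul_apply, smul_eq_mul]
  rw [hfk, ← hz] at hw
  have hz0 : z ≠ 0 := by
    rintro rfl; rw [map_zero] at hz; exact hne hz.symm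
  refine ⟨w / z, ?_⟩
  have halg : Function.Injective (algebraMap ℂ O) := (algebraMap ℂ O).injective
  have : algebraMap ℂ O z * (f - algebraMap ℂ O (w / z)) = 0 := by
    rw [mul_sub, ← map_mul, mul_div_cancel₀ w hz0, hw]; ring
  rcases mul_eq_zero.mp this with h | h
  · exact absurd (halg (by rwa [map_zero] at *)) hz0
  · linear_combination -h
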